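/- Let N ≥ 1 be an integer and w ∈ [0,1] a real. Let X be a random variable with the Binomial(N, w) distribution and let Y be a stochastic rounding of Nw. Then E[X(X−1)] ≥ E[Y(Y−1)]. -/

import Mathlib

open MeasureTheory

/-- `Y` is a stochastic rounding of the nonnegative real `x`: an ℕ-valued random
variable taking the value `⌊x⌋` with probability `1 - x + ⌊x⌋` and the value `⌊x⌋ + 1`
with probability `x - ⌊x⌋`. -/
def IsStochasticRounding {Ω : Type*} [MeasurableSpace Ω] (P : Measure Ω)
    (x : ℝ) (Y : Ω → ℕ) : Prop :=
  Measurable Y ∧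
    P {ω | Y ω = ⌊x⌋₊} = ENNReal.ofReal (1 - x + ⌊x⌋₊) ∧
    P {ω | Y ω = ⌊x⌋₊ + 1} = ENNReal.ofReal (x - ⌊x⌋₊)

/-- The integral of `g ∘ X` for an `ℕ`-valued random variable whose distribution is
carried by a finite set `S` equals the corresponding finite weighted sum. -/
lemma integral_nat_eq_sum {Ω : Type*} [MeasurableSpace Ω] (P : Measure Ω) [IsProbabilityMeasure P]
    (X : Ω → ℕ) (hX : Measurable X) (S : Finset ℕ)
    (hS : ∑ k ∈ S, P {ω | X ω = k} = 1) (g : ℕ → ℝ) :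
    ∫ ω, g (X ω) ∂P = ∑ k ∈ S, g k * (P {ω | X ω = k}).toReal := by
  have hA : ∀ k : ℕ, MeasurableSet {ω | X ω = k} := fun k =>
    hX (measurableSet_singleton k)
  have hdisj : (S : Set ℕ).PairwiseDisjoint fun k => {ω | X ω = k} := by
    intro a _ b _ hab
    refine Set.disjoint_left.mpr fun ω ha hb => hab ?_
    simp only [Set.mem_setOf_eq] at ha hb
    rw [← ha, ← hb]
  have hU : P (⋃ k ∈ S, {ω | X ω = k}) = 1 := by
    rw [measure_biUnion_finset hdisj fun k _ => hA k, hS]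
  have hae : ∀ᵐ ω ∂P, ω ∈ ⋃ k ∈ S, {ω' | X ω' = k} := by
    have hc : P (⋃ k ∈ S, {ω' | X ω' = k})ᶜ = 0 := by
      rw [measure_compl (Finset.measurableSet_biUnion S fun k _ => hA k) (measure_ne_top _ _), hU]
      simp
    rw [MeasureTheory.ae_iff]
    rw [show {a | ¬ a ∈ ⋃ k ∈ S, {ω' | X ω' = k}} = (⋃ k ∈ S, {ω' | X ω' = k})ᶜ from rfl]
    exact hc
  have heq : (fun ω => g (X ω)) =ᵐ[P]
      fun ω => ∑ k ∈ S, Set.indicator {ω' | X ω' = k} (fun _ => g k) ω := by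
    filter_upwards [hae] with ω hω
    simp only [Set.mem_iUnion, Set.mem_setOf_eq, exists_prop] at hω
    obtain ⟨k₀, hk₀S, hk₀⟩ := hω
    rw [Finset.sum_eq_single k₀]
    · rw [Set.indicator_of_mem (by simpa using hk₀), hk₀]
    · intro b _ hb
      exact Set.indicator_of_notMem (by simp [hk₀, hb.symm]) _
    · intro h; exact absurd hk₀S h
  rw [integral_congr_ae heq, integral_finset_sum]
  · refine Finset.sum_congr rfl fun k _ => ?_
    rw [integral_indicator_const _ (hA k), smul_eq_mul, mul_comm, measureReal_def]
  · intro k _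
    exact (integrable_indicator_iff (hA k)).mpr
      (integrableOn_const (measure_ne_top _ _))

lemma choose_factorial_id (m i : ℕ) :
    (i + 2) * (i + 1) * ((m + 2).choose (i + 2)) = (m + 2) * (m + 1) * m.choose i := by
  have h1 := Nat.add_one_mul_choose_eq (m + 1) (i + 1)
  have h2 := Nat.add_one_mul_choose_eq m i
  calc (i + 2) * (i + 1) * ((m + 2).choose (i + 2))
      = (i + 1) * ((m + 2).choose (i + 2) * (i + 2)) := by ring
    _ = (i + 1) * ((m + 1 + 1) * (m + 1).choose (i + 1)) := by rw [← h1]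
    _ = (m + 2) * ((m + 1).choose (i + 1) * (i + 1)) := by ring
    _ = (m + 2) * ((m + 1) * m.choose i) := by rw [← h2]
    _ = (m + 2) * (m + 1) * m.choose i := by ring

lemma binom_sum_one (m : ℕ) (w : ℝ) :
    ∑ j ∈ Finset.range (m + 1),
        (m.choose j : ℝ) * w ^ j * (1 - w) ^ (m - j) = 1 := by
  have h := add_pow w (1 - w) m
  simp only [add_sub_cancel, one_pow] at h
  calc ∑ j ∈ Finset.range (m + 1), (m.choose j : ℝ) * w ^ j * (1 - w) ^ (m - j)
      = ∑ j ∈ Finset.range (m + 1), w ^ j * (1 - w) ^ (m - j) * (m.choose j : ℝ) :=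
        Finset.sum_congr rfl fun j _ => by ring
    _ = 1 := h.symm

/-- Second factorial moment of the binomial distribution. -/
lemma binom_second_moment (n : ℕ) (w : ℝ) :
    ∑ k ∈ Finset.range (n + 1),
      (k : ℝ) * ((k : ℝ) - 1) * ((n.choose k : ℝ) * w ^ k * (1 - w) ^ (n - k))
      = (n : ℝ) * ((n : ℝ) - 1) * w ^ 2 := by
  match n with
  | 0 => simp
  | 1 => norm_num [Finset.sum_range_succ]
  | (m + 2) =>
    rw [Finset.sum_range_succ', Finset.sum_range_succ']
    have hterm : ∀ i ∈ Finset.range (m + 1),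
        ((i + 1 + 1 : ℕ) : ℝ) * (((i + 1 + 1 : ℕ) : ℝ) - 1) *
          (((m + 2).choose (i + 1 + 1) : ℝ) * w ^ (i + 1 + 1) * (1 - w) ^ (m + 2 - (i + 1 + 1)))
        = ((m : ℝ) + 2) * ((m : ℝ) + 1) * w ^ 2 *
          ((m.choose i : ℝ) * w ^ i * (1 - w) ^ (m - i)) := by
      intro i hi
      have hc := choose_factorial_id m i
      have hcr : ((i : ℝ) + 2) * ((i : ℝ) + 1) * (((m + 2).choose (i + 2) : ℝ))
          = ((m : ℝ) + 2) * ((m : ℝ) + 1) * (m.choose i : ℝ) := by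
        exact_mod_cast congrArg (Nat.cast : ℕ → ℝ) hc
      have hsub : m + 2 - (i + 1 + 1) = m - i := by omega
      rw [hsub]
      push_cast
      linear_combination (w ^ (i + 2) * (1 - w) ^ (m - i)) * hcr
    rw [Finset.sum_congr rfl hterm, ← Finset.mul_sum, binom_sum_one]
    push_cast
    ring

/-- The key elementary inequality behind the proposition. -/
lemma key_ineq (N m : ℕ) (hN : 1 ≤ N) (w f : ℝ) (hmN : m ≤ N)
    (hsum : (m : ℝ) + f = N * w) (hf0 : 0 ≤ f) (hf1 : f < 1)
    (hw0 : 0 ≤ w) (hw1 : w ≤ 1) :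
    (m : ℝ) * ((m : ℝ) - 1) * (1 - f) + ((m : ℝ) + 1) * (m : ℝ) * f ≤
      (N : ℝ) * ((N : ℝ) - 1) * w ^ 2 := by
  have hNr : (1 : ℝ) ≤ N := by exact_mod_cast hN
  have hm0 : (0 : ℝ) ≤ m := Nat.cast_nonneg m
  rcases eq_or_lt_of_le hmN with hEq | hLt
  · -- m = N : then f = 0 and w = 1
    have hmr : (m : ℝ) = N := by exact_mod_cast hEq
    have hwN : (N : ℝ) * w ≤ N := by nlinarith
    have hf0' : f = 0 := le_antisymm (by linarith) hf0
    have hNw : (N : ℝ) * w = N := by linarith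
    have hNpos : (0 : ℝ) < N := by linarith
    have hw1' : w = 1 := by
      have h' : (N : ℝ) * w = (N : ℝ) * 1 := by linarith
      exact mul_left_cancel₀ (ne_of_gt hNpos) h'
    rw [hf0', hw1', hmr]; nlinarith [hNr]
  · have hmN1 : (m : ℝ) ≤ (N : ℝ) - 1 := by
      have : (m : ℝ) + 1 ≤ N := by exact_mod_cast hLt
      linarith
    rcases le_total f w with h | h
    · -- f ≤ w : f(1-f) ≤ w(1-f) ≤ w·N(1-w)
      have h1 : 0 ≤ (w - f) * (1 - f) := mul_nonneg (by linarith) (by linarith)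
      have h2 : 0 ≤ w * ((N : ℝ) * (1 - w) - (1 - f)) := by
        apply mul_nonneg hw0
        nlinarith [hsum, hmN1]
      nlinarith [h1, h2, hsum]
    · -- w ≤ f : f(1-f) ≤ f(1-w) ≤ Nw(1-w)
      have h1 : 0 ≤ f * (f - w) := mul_nonneg hf0 (by linarith)
      have h2 : 0 ≤ (1 - w) * ((N : ℝ) * w - f) := by
        apply mul_nonneg (by linarith)
        nlinarith [hsum, hm0]
      nlinarith [h1, h2, hsum]

/-- **Proposition of Appendix A.** If `X` has the `Binomial(N, w)`
distribution and `Y` is a stochastic rounding of `Nw`, then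
`E[X(X-1)] ≥ E[Y(Y-1)]`. -/
theorem binomial_pair_rate_dominates_stochastic_rounding
    {Ω₁ Ω₂ : Type*} [MeasurableSpace Ω₁] [MeasurableSpace Ω₂]
    (P₁ : Measure Ω₁) [IsProbabilityMeasure P₁]
    (P₂ : Measure Ω₂) [IsProbabilityMeasure P₂]
    (N : ℕ) (hN : 1 ≤ N) (w : ℝ) (hw0 : 0 ≤ w) (hw1 : w ≤ 1)
    (X : Ω₁ → ℕ) (hXmeas : Measurable X)
    (hX : ∀ k : ℕ, P₁ {ω | X ω = k} =
      ENNReal.ofReal ((N.choose k : ℝ) * w ^ k * (1 - w) ^ (N - k)))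
    (Y : Ω₂ → ℕ) (hY : IsStochasticRounding P₂ ((N : ℝ) * w) Y) :
    (∫ ω, (Y ω : ℝ) * ((Y ω : ℝ) - 1) ∂P₂) ≤
      ∫ ω, (X ω : ℝ) * ((X ω : ℝ) - 1) ∂P₁ := by
  obtain ⟨hYmeas, hYm, hYm1⟩ := hY
  set m : ℕ := ⌊(N : ℝ) * w⌋₊ with hm
  have hx0 : (0 : ℝ) ≤ N * w := mul_nonneg (Nat.cast_nonneg N) hw0
  have hf0 : (0 : ℝ) ≤ N * w - m := sub_nonneg.mpr (Nat.floor_le hx0)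
  have hf1 : (N : ℝ) * w - m < 1 := by
    have := Nat.lt_floor_add_one ((N : ℝ) * w)
    rw [← hm] at this
    linarith
  have hg0 : (0 : ℝ) ≤ 1 - N * w + m := by linarith
  have hmN : m ≤ N := by
    have h1 : (N : ℝ) * w ≤ (N : ℝ) := by nlinarith [Nat.cast_nonneg (α := ℝ) N]
    have := Nat.floor_le_floor h1
    simpa [hm] using this
  -- the Y-side integral
  have hSY : ∑ k ∈ ({m, m + 1} : Finset ℕ), P₂ {ω | Y ω = k} = 1 := by
    rw [Finset.sum_pair (by omega : m ≠ m + 1), hYm, hYm1,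
      ← ENNReal.ofReal_add hg0 hf0]
    norm_num
  have hYint : (∫ ω, (Y ω : ℝ) * ((Y ω : ℝ) - 1) ∂P₂) =
      ∑ k ∈ ({m, m + 1} : Finset ℕ),
        (k : ℝ) * ((k : ℝ) - 1) * (P₂ {ω | Y ω = k}).toReal :=
    integral_nat_eq_sum P₂ Y hYmeas {m, m + 1} hSY (fun k => (k : ℝ) * ((k : ℝ) - 1))
  -- the X-side integral
  have hprob : ∀ k, 0 ≤ (N.choose k : ℝ) * w ^ k * (1 - w) ^ (N - k) := fun k =>
    mul_nonneg (mul_nonneg (Nat.cast_nonneg _) (pow_nonneg hw0 _))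
      (pow_nonneg (by linarith) _)
  have hSX : ∑ k ∈ Finset.range (N + 1), P₁ {ω | X ω = k} = 1 := by
    simp_rw [hX]
    rw [← ENNReal.ofReal_sum_of_nonneg fun k _ => hprob k, binom_sum_one]
    exact ENNReal.ofReal_one
  have hXint : (∫ ω, (X ω : ℝ) * ((X ω : ℝ) - 1) ∂P₁) =
      ∑ k ∈ Finset.range (N + 1),
        (k : ℝ) * ((k : ℝ) - 1) * (P₁ {ω | X ω = k}).toReal :=
    integral_nat_eq_sum P₁ X hXmeas (Finset.range (N + 1)) hSX
      (fun k => (k : ℝ) * ((k : ℝ) - 1))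
  rw [hYint, hXint]
  -- evaluate the X side
  have hXval : ∑ k ∈ Finset.range (N + 1),
      (k : ℝ) * ((k : ℝ) - 1) * (P₁ {ω | X ω = k}).toReal =
      (N : ℝ) * ((N : ℝ) - 1) * w ^ 2 := by
    rw [← binom_second_moment N w]
    refine Finset.sum_congr rfl fun k _ => ?_
    rw [hX k, ENNReal.toReal_ofReal (hprob k)]
  -- evaluate the Y side
  have hYval : ∑ k ∈ ({m, m + 1} : Finset ℕ),
      (k : ℝ) * ((k : ℝ) - 1) * (P₂ {ω | Y ω = k}).toReal =
      (m : ℝ) * ((m : ℝ) - 1) * (1 - ((N : ℝ) * w - m)) +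
        ((m : ℝ) + 1) * (m : ℝ) * ((N : ℝ) * w - m) := by
    rw [Finset.sum_pair (by omega : m ≠ m + 1), hYm, hYm1,
      ENNReal.toReal_ofReal hg0, ENNReal.toReal_ofReal hf0]
    push_cast
    ring
  rw [hXval, hYval]
  exact key_ineq N m hN w ((N : ℝ) * w - m) hmN (by ring) hf0 hf1 hw0 hw1
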